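/- Let N, d ∈ ℕ and let G₁, …, G_d be N×N complex matrices such that each matrix 2·G_k satisfies the row condition (every row of 2·G_k either has exactly one non-zero entry lying in S₁, or exactly two non-zero entries both lying in S₂). Let U = G_d · G_{d−1} ⋯ G₁, and for indices (r, s) let a, b, c, e be the (unique) integers with 2^d · U(r, s) = a + b·i + c·√2 + e·i·√2. Then each of the integers x ∈ {a, b, c, e} satisfies −2^{⌈3d/2⌉+1} < x < 2^{⌈3d/2⌉+1}; hence each coefficient is representable as a signed integer on ⌈3d/2⌉ + 2 bits. -/

import Mathlib

noncomputable def S1 : Set ℂ :=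
  {2, -2, 2 * Complex.I, -(2 * Complex.I),
   (Real.sqrt 2 : ℂ) + Complex.I * (Real.sqrt 2 : ℂ),
   (Real.sqrt 2 : ℂ) - Complex.I * (Real.sqrt 2 : ℂ),
   -(Real.sqrt 2 : ℂ) + Complex.I * (Real.sqrt 2 : ℂ),
   -(Real.sqrt 2 : ℂ) - Complex.I * (Real.sqrt 2 : ℂ)}

noncomputable def S2 : Set ℂ :=
  {(Real.sqrt 2 : ℂ), -(Real.sqrt 2 : ℂ),
   Complex.I * (Real.sqrt 2 : ℂ), -(Complex.I * (Real.sqrt 2 : ℂ)),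
   1 + Complex.I, 1 - Complex.I}

/-- Every row has exactly one non-zero entry lying in `S1`, or exactly two
non-zero entries both lying in `S2`. -/
def RowCond {n : Type*} (M : Matrix n n ℂ) : Prop :=
  ∀ r, (∃ j₀, M r j₀ ≠ 0 ∧ M r j₀ ∈ S1 ∧ ∀ j, j ≠ j₀ → M r j = 0) ∨
       (∃ j₁ j₂, j₁ ≠ j₂ ∧ M r j₁ ≠ 0 ∧ M r j₂ ≠ 0 ∧
          M r j₁ ∈ S2 ∧ M r j₂ ∈ S2 ∧ ∀ j, j ≠ j₁ → j ≠ j₂ → M r j = 0)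

namespace CoeffsAux

abbrev Q4 := ℤ × ℤ × ℤ × ℤ

def qmul (x y : Q4) : Q4 :=
  (x.1*y.1 - x.2.1*y.2.1 + 2*x.2.2.1*y.2.2.1 - 2*x.2.2.2*y.2.2.2,
   x.1*y.2.1 + x.2.1*y.1 + 2*x.2.2.1*y.2.2.2 + 2*x.2.2.2*y.2.2.1,
   x.1*y.2.2.1 + x.2.2.1*y.1 - x.2.1*y.2.2.2 - x.2.2.2*y.2.1,
   x.1*y.2.2.2 + x.2.2.2*y.1 + x.2.1*y.2.2.1 + x.2.2.1*y.2.1)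

def qadd (x y : Q4) : Q4 := (x.1+y.1, x.2.1+y.2.1, x.2.2.1+y.2.2.1, x.2.2.2+y.2.2.2)

noncomputable def vgen (t : ℂ) (x : Q4) : ℂ :=
  (x.1 : ℂ) + (x.2.1 : ℂ) * Complex.I + (x.2.2.1 : ℂ) * t + (x.2.2.2 : ℂ) * Complex.I * t

lemma vgen_mul (t : ℂ) (ht : t * t = 2) (x y : Q4) :
    vgen t (qmul x y) = vgen t x * vgen t y := by
  obtain ⟨a,b,c,e⟩ := x; obtain ⟨a',b',c',e'⟩ := y
  simp only [vgen, qmul]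
  push_cast
  linear_combination (-((b:ℂ)*b' + e*e'*t*t + (b*e'+b'*e)*t)) * Complex.I_mul_I +
    (-((c:ℂ)*c' + (c*e'+c'*e)*Complex.I - e*e')) * ht

lemma vgen_add (t : ℂ) (x y : Q4) :
    vgen t (qadd x y) = vgen t x + vgen t y := by
  obtain ⟨a,b,c,e⟩ := x; obtain ⟨a',b',c',e'⟩ := y
  simp only [vgen, qadd]; push_cast; ring

lemma sqrt2_sq : (Real.sqrt 2 : ℝ)^2 = 2 := Real.sq_sqrt (by norm_num)

lemma one_le_sqrt2 : (1:ℝ) ≤ Real.sqrt 2 := by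
  nlinarith [sqrt2_sq, Real.sqrt_nonneg 2]

lemma abs_le_of_normSq_le {z : ℂ} {r : ℝ} (hr : 0 ≤ r) (h : Complex.normSq z ≤ r^2) :
    ‖z‖ ≤ r := by
  have := Real.sqrt_le_sqrt h
  rwa [Real.sqrt_sq hr, ← Complex.norm_def] at this

lemma vgen_re (t : ℝ) (q : Q4) : (vgen (t:ℂ) q).re = (q.1 : ℝ) + q.2.2.1 * t := by
  simp [vgen]

lemma vgen_im (t : ℝ) (q : Q4) : (vgen (t:ℂ) q).im = (q.2.1 : ℝ) + q.2.2.2 * t := by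
  simp [vgen]

lemma abs_vgen_le (t : ℝ) (q : Q4) {r : ℝ} (hr : 0 ≤ r)
    (h : ((q.1 : ℝ) + q.2.2.1 * t)^2 + ((q.2.1 : ℝ) + q.2.2.2 * t)^2 ≤ r^2) :
    ‖vgen (t : ℂ) q‖ ≤ r := by
  apply abs_le_of_normSq_le hr
  rw [Complex.normSq_apply, vgen_re, vgen_im]
  convert h using 2 <;> ring

lemma mem_S1_rep {z : ℂ} (hz : z ∈ S1) :
    ∃ q : Q4, vgen (Real.sqrt 2 : ℂ) q = z ∧
      ∀ t : ℝ, t ^ 2 = 2 → ‖vgen (t : ℂ) q‖ ≤ 2 := by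
  simp only [S1, Set.mem_insert_iff, Set.mem_singleton_iff] at hz
  rcases hz with rfl|rfl|rfl|rfl|rfl|rfl|rfl|rfl
  · exact ⟨(2,0,0,0), by simp only [vgen]; push_cast; ring, fun t ht => abs_vgen_le t _ (by norm_num) (by push_cast; nlinarith)⟩
  · exact ⟨(-2,0,0,0), by simp only [vgen]; push_cast; ring, fun t ht => abs_vgen_le t _ (by norm_num) (by push_cast; nlinarith)⟩
  · exact ⟨(0,2,0,0), by simp only [vgen]; push_cast; ring, fun t ht => abs_vgen_le t _ (by norm_num) (by push_cast; nlinarith)⟩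
  · exact ⟨(0,-2,0,0), by simp only [vgen]; push_cast; ring, fun t ht => abs_vgen_le t _ (by norm_num) (by push_cast; nlinarith)⟩
  · exact ⟨(0,0,1,1), by simp only [vgen]; push_cast; ring, fun t ht => abs_vgen_le t _ (by norm_num) (by push_cast; nlinarith)⟩
  · exact ⟨(0,0,1,-1), by simp only [vgen]; push_cast; ring, fun t ht => abs_vgen_le t _ (by norm_num) (by push_cast; nlinarith)⟩
  · exact ⟨(0,0,-1,1), by simp only [vgen]; push_cast; ring, fun t ht => abs_vgen_le t _ (by norm_num) (by push_cast; nlinarith)⟩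
  · exact ⟨(0,0,-1,-1), by simp only [vgen]; push_cast; ring, fun t ht => abs_vgen_le t _ (by norm_num) (by push_cast; nlinarith)⟩

lemma mem_S2_rep {z : ℂ} (hz : z ∈ S2) :
    ∃ q : Q4, vgen (Real.sqrt 2 : ℂ) q = z ∧
      ∀ t : ℝ, t ^ 2 = 2 → ‖vgen (t : ℂ) q‖ ≤ Real.sqrt 2 := by
  have h2 : (0:ℝ) ≤ Real.sqrt 2 := Real.sqrt_nonneg 2
  simp only [S2, Set.mem_insert_iff, Set.mem_singleton_iff] at hz
  rcases hz with rfl|rfl|rfl|rfl|rfl|rfl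
  · exact ⟨(0,0,1,0), by simp only [vgen]; push_cast; ring, fun t ht => abs_vgen_le t _ h2 (by push_cast; nlinarith [sqrt2_sq])⟩
  · exact ⟨(0,0,-1,0), by simp only [vgen]; push_cast; ring, fun t ht => abs_vgen_le t _ h2 (by push_cast; nlinarith [sqrt2_sq])⟩
  · exact ⟨(0,0,0,1), by simp only [vgen]; push_cast; ring, fun t ht => abs_vgen_le t _ h2 (by push_cast; nlinarith [sqrt2_sq])⟩
  · exact ⟨(0,0,0,-1), by simp only [vgen]; push_cast; ring, fun t ht => abs_vgen_le t _ h2 (by push_cast; nlinarith [sqrt2_sq])⟩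
  · exact ⟨(1,1,0,0), by simp only [vgen]; push_cast; ring, fun t ht => abs_vgen_le t _ h2 (by push_cast; nlinarith [sqrt2_sq])⟩
  · exact ⟨(1,-1,0,0), by simp only [vgen]; push_cast; ring, fun t ht => abs_vgen_le t _ h2 (by push_cast; nlinarith [sqrt2_sq])⟩

lemma htc_of_ht {t : ℝ} (ht : t ^ 2 = 2) : (t : ℂ) * (t : ℂ) = 2 := by
  rw [← Complex.ofReal_mul, show t * t = 2 by nlinarith]
  norm_num

/-- Key induction: entries of a product of row-condition matrices have
bounded `ℤ[i,√2]`-coefficient representations, uniformly over the two real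
embeddings `√2 ↦ ±√2`. -/
lemma key {N : ℕ} : ∀ (L : List (Matrix (Fin N) (Fin N) ℂ)),
    (∀ M ∈ L, RowCond M) → ∀ r s : Fin N,
    ∃ q : Q4, L.prod r s = vgen (Real.sqrt 2 : ℂ) q ∧
      ∀ t : ℝ, t ^ 2 = 2 →
        ‖vgen (t : ℂ) q‖ ≤ (2 * Real.sqrt 2) ^ L.length
  | [], _, r, s => by
    by_cases hrs : r = s
    · refine ⟨(1,0,0,0), by simp [hrs, vgen, Matrix.one_apply], fun t ht => ?_⟩
      simpa using abs_vgen_le t (1,0,0,0) (r := 1) one_pos.le (by norm_num)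
    · refine ⟨(0,0,0,0), by simp [Matrix.one_apply, hrs, vgen], fun t ht => ?_⟩
      simpa using abs_vgen_le t (0,0,0,0) (r := 1) one_pos.le (by norm_num)
  | M :: L, hL, r, s => by
    have hM : RowCond M := hL M List.mem_cons_self
    have hL' : ∀ M' ∈ L, RowCond M' := fun M' h => hL M' (List.mem_cons_of_mem _ h)
    have hsqc : (Real.sqrt 2 : ℂ) * (Real.sqrt 2 : ℂ) = 2 := htc_of_ht sqrt2_sq
    have hBpos : (0:ℝ) ≤ (2 * Real.sqrt 2) ^ L.length :=
      pow_nonneg (by positivity) _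
    have h22 : (2:ℝ) ≤ 2 * Real.sqrt 2 := by nlinarith [one_le_sqrt2]
    rw [List.prod_cons]
    rcases hM r with ⟨j₀, hne, hS1, hz⟩ | ⟨j₁, j₂, hj, hne1, hne2, hS2a, hS2b, hz⟩
    · obtain ⟨q0, hq0, hq0b⟩ := mem_S1_rep hS1
      obtain ⟨q1, hq1, hq1b⟩ := key L hL' j₀ s
      refine ⟨qmul q0 q1, ?_, ?_⟩
      · rw [Matrix.mul_apply,
          Finset.sum_eq_single j₀ (fun j _ hj' => by rw [hz j hj', zero_mul])
            (by simp), vgen_mul _ hsqc, hq0, hq1]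
      · intro t ht
        rw [vgen_mul _ (htc_of_ht ht), norm_mul, List.length_cons, pow_succ]
        have := hq0b t ht
        have := hq1b t ht
        have := norm_nonneg (vgen (t:ℂ) q1)
        calc ‖vgen (t:ℂ) q0‖ * ‖vgen (t:ℂ) q1‖
            ≤ 2 * (2 * Real.sqrt 2) ^ L.length := by
              apply mul_le_mul ‹_› ‹_› ‹_› (by norm_num)
          _ ≤ (2 * Real.sqrt 2) * (2 * Real.sqrt 2) ^ L.length := by
              apply mul_le_mul_of_nonneg_right h22 hBpos
          _ = (2 * Real.sqrt 2) ^ L.length * (2 * Real.sqrt 2) := by ring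
    · obtain ⟨q1, hq1, hq1b⟩ := mem_S2_rep hS2a
      obtain ⟨q2, hq2, hq2b⟩ := mem_S2_rep hS2b
      obtain ⟨p1, hp1, hp1b⟩ := key L hL' j₁ s
      obtain ⟨p2, hp2, hp2b⟩ := key L hL' j₂ s
      refine ⟨qadd (qmul q1 p1) (qmul q2 p2), ?_, ?_⟩
      · rw [Matrix.mul_apply, ← Finset.sum_subset (Finset.subset_univ {j₁, j₂})
          (fun j _ hj' => by
            simp only [Finset.mem_insert, Finset.mem_singleton, not_or] at hj'
            rw [hz j hj'.1 hj'.2, zero_mul]),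
          Finset.sum_pair hj, vgen_add, vgen_mul _ hsqc, vgen_mul _ hsqc,
          hq1, hq2, hp1, hp2]
      · intro t ht
        rw [vgen_add, List.length_cons, pow_succ]
        calc ‖vgen (t:ℂ) (qmul q1 p1) + vgen (t:ℂ) (qmul q2 p2)‖
            ≤ ‖vgen (t:ℂ) (qmul q1 p1)‖ + ‖vgen (t:ℂ) (qmul q2 p2)‖ :=
              norm_add_le _ _
          _ ≤ Real.sqrt 2 * (2 * Real.sqrt 2) ^ L.length
              + Real.sqrt 2 * (2 * Real.sqrt 2) ^ L.length := by
              apply add_le_add <;>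
                · rw [vgen_mul _ (htc_of_ht ht), norm_mul]
                  apply mul_le_mul (by first | exact hq1b t ht | exact hq2b t ht)
                    (by first | exact hp1b t ht | exact hp2b t ht)
                    (norm_nonneg _) (Real.sqrt_nonneg 2)
          _ = (2 * Real.sqrt 2) ^ L.length * (2 * Real.sqrt 2) := by ring

lemma pair_unique {p q p' q' : ℤ}
    (h : (p:ℝ) + q * Real.sqrt 2 = p' + q' * Real.sqrt 2) : p = p' ∧ q = q' := by
  by_cases hq : q = q'
  · subst hq
    have : (p:ℝ) = p' := by linarith
    exact ⟨by exact_mod_cast this, rfl⟩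
  · exfalso
    apply irrational_sqrt_two
    refine ⟨((p - p' : ℤ) : ℚ) / ((q' - q : ℤ) : ℚ), ?_⟩
    have hden : ((q' : ℝ) - q) ≠ 0 := by
      have : ((q' - q : ℤ) : ℝ) ≠ 0 := by
        exact_mod_cast sub_ne_zero.mpr (Ne.symm hq)
      push_cast at this; exact this
    push_cast
    field_simp
    linarith

lemma prod_map_smul {N : ℕ} (c : ℂ) :
    ∀ L : List (Matrix (Fin N) (Fin N) ℂ),
      (L.map (fun M => c • M)).prod = c ^ L.length • L.prod
  | [] => by simp
  | M :: L => by
    rw [List.map_cons, List.prod_cons, List.prod_cons, prod_map_smul c L,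
      smul_mul_assoc, mul_smul_comm, smul_smul, List.length_cons, pow_succ,
      mul_comm (c ^ L.length) c]

end CoeffsAux

open CoeffsAux in
/-- Theorem 1 of the paper: the integer coefficients of the entries of `2^d` times
a product of `d` gates fit on `⌈3d/2⌉ + 2` signed bits. -/
theorem coeffs_bit_bound (N d : ℕ)
    (G : Fin d → Matrix (Fin N) (Fin N) ℂ)
    (hG : ∀ k, RowCond ((2 : ℂ) • G k))
    (r s : Fin N) (a b c e : ℤ)
    (h : (2 : ℂ) ^ d * ((List.ofFn G).reverse.prod) r s =
        (a : ℂ) + (b : ℂ) * Complex.I + (c : ℂ) * (Real.sqrt 2 : ℂ) +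
          (e : ℂ) * Complex.I * (Real.sqrt 2 : ℂ)) :
    ∀ x ∈ ({a, b, c, e} : Set ℤ),
      -(2 ^ ((3 * d + 1) / 2 + 1) : ℤ) < x ∧ x < 2 ^ ((3 * d + 1) / 2 + 1) := by
  classical
  set L : List (Matrix (Fin N) (Fin N) ℂ) := (List.ofFn G).reverse with hLdef
  have hlen : L.length = d := by simp [hLdef]
  have hmem : ∀ M' ∈ L.map (fun M => (2:ℂ) • M), RowCond M' := by
    intro M' hM'
    rw [List.mem_map] at hM'
    obtain ⟨M, hM, rfl⟩ := hM'
    rw [hLdef, List.mem_reverse, List.mem_ofFn] at hM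
    obtain ⟨k, rfl⟩ := hM
    exact hG k
  obtain ⟨q, hq, hqb⟩ := key (L.map (fun M => (2:ℂ) • M)) hmem r s
  have hlen' : (L.map (fun M => (2:ℂ) • M)).length = d := by simp [hlen]
  have hprod : (L.map (fun M => (2:ℂ) • M)).prod r s = (2:ℂ)^d * L.prod r s := by
    rw [prod_map_smul, hlen, Matrix.smul_apply, smul_eq_mul]
  rw [hprod, h] at hq
  -- identify q with (a, b, c, e)
  have hq' : vgen (Real.sqrt 2 : ℂ) (a, b, c, e) = vgen (Real.sqrt 2 : ℂ) q := by
    rw [← hq]; simp [vgen]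
  obtain ⟨qa, qb, qc, qe⟩ := q
  have hre := congrArg Complex.re hq'
  have him := congrArg Complex.im hq'
  rw [show (Real.sqrt 2 : ℂ) = ((Real.sqrt 2 : ℝ) : ℂ) by norm_num] at hre him
  rw [vgen_re, vgen_re] at hre
  rw [vgen_im, vgen_im] at him
  obtain ⟨hac, hcc⟩ := pair_unique hre
  obtain ⟨hbd, hed⟩ := pair_unique him
  subst hac; subst hcc; subst hbd; subst hed
  -- bounds
  set K : ℕ := (3 * d + 1) / 2 with hK
  set B : ℝ := (2 * Real.sqrt 2) ^ d with hB
  have hB0 : 0 ≤ B := pow_nonneg (by positivity) _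
  have hBK : B ≤ (2:ℝ) ^ K := by
    have hsq : B ^ 2 = (2:ℝ) ^ (3 * d) := by
      rw [hB, ← pow_mul, mul_comm d 2, pow_mul,
        show (2 * Real.sqrt 2) ^ 2 = 8 by nlinarith [sqrt2_sq],
        show (8:ℝ) = 2 ^ 3 by norm_num, ← pow_mul]
    have h3d : 3 * d ≤ 2 * K := by omega
    have : B ^ 2 ≤ ((2:ℝ) ^ K) ^ 2 := by
      rw [hsq, ← pow_mul, mul_comm K 2]
      exact pow_le_pow_right₀ (by norm_num) h3d
    calc B = Real.sqrt (B ^ 2) := (Real.sqrt_sq hB0).symm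
      _ ≤ Real.sqrt (((2:ℝ) ^ K) ^ 2) := Real.sqrt_le_sqrt this
      _ = (2:ℝ) ^ K := Real.sqrt_sq (by positivity)
  have hp := hqb (Real.sqrt 2) sqrt2_sq
  have hm := hqb (-Real.sqrt 2) (by rw [neg_pow]; simp [sqrt2_sq])
  rw [hlen'] at hp hm
  have hpre : |(a:ℝ) + c * Real.sqrt 2| ≤ B := by
    have h' := (Complex.abs_re_le_norm _).trans hp
    rw [vgen_re] at h'
    simpa using h'
  have hmre : |(a:ℝ) + c * (-Real.sqrt 2)| ≤ B := by
    have h' := (Complex.abs_re_le_norm _).trans hm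
    rw [vgen_re] at h'
    simpa using h'
  have hpim : |(b:ℝ) + e * Real.sqrt 2| ≤ B := by
    have h' := (Complex.abs_im_le_norm _).trans hp
    rw [vgen_im] at h'
    simpa using h'
  have hmim : |(b:ℝ) + e * (-Real.sqrt 2)| ≤ B := by
    have h' := (Complex.abs_im_le_norm _).trans hm
    rw [vgen_im] at h'
    simpa using h'
  have habs : ∀ p q : ℤ, |(p:ℝ) + q * Real.sqrt 2| ≤ B →
      |(p:ℝ) + q * (-Real.sqrt 2)| ≤ B → |(p:ℝ)| ≤ B ∧ |(q:ℝ)| ≤ B := by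
    intro p q h1 h2
    rw [abs_le] at h1 h2
    constructor
    · rw [abs_le]; constructor <;> linarith [h1.1, h1.2, h2.1, h2.2]
    · have hq2 : |(q:ℝ) * Real.sqrt 2| ≤ B := by
        rw [abs_le]; constructor <;> linarith [h1.1, h1.2, h2.1, h2.2]
      have hmono : |(q:ℝ)| ≤ |(q:ℝ) * Real.sqrt 2| := by
        rw [abs_mul, abs_of_nonneg (Real.sqrt_nonneg 2)]
        exact le_mul_of_one_le_right (abs_nonneg _) one_le_sqrt2
      linarith
  obtain ⟨ha, hc⟩ := habs a c hpre hmre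
  obtain ⟨hb, he⟩ := habs b e hpim hmim
  have final : ∀ x : ℤ, |(x:ℝ)| ≤ B → -(2 ^ (K + 1) : ℤ) < x ∧ x < 2 ^ (K + 1) := by
    intro x hx
    have hxr : |(x:ℝ)| ≤ (2:ℝ) ^ K := hx.trans hBK
    have hxz : |x| ≤ (2:ℤ) ^ K := by exact_mod_cast hxr
    have hlt : (2:ℤ) ^ K < 2 ^ (K + 1) := by
      rw [pow_succ]
      nlinarith [pow_pos (by norm_num : (0:ℤ) < 2) K]
    rw [abs_le] at hxz
    exact ⟨by linarith [hxz.1], by linarith [hxz.2]⟩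
  intro x hx
  simp only [Set.mem_insert_iff, Set.mem_singleton_iff] at hx
  rcases hx with rfl|rfl|rfl|rfl
  · exact final _ ha
  · exact final _ hb
  · exact final _ hc
  · exact final _ he
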